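/- Let G be a directed graph with target vertex s, current stack S (a set of vertices) with top vertex u, and a correct block assignment with respect to S. Suppose p is a path from u to s with len(p) ≤ k − len(S), and no vertex of p except possibly u belongs to S. Then for every vertex x on p other than u, the pruning condition len(S') + 1 + x.block ≤ k is satisfiable along p; formally, for each such x with suffix length p[x], we have x.block ≤ p[x], so the DFS with block-based pruning reaches s along p. -/
import Mathlib


variable {V : Type*}

/-- A closed walk of length `h` in a directed graph with edge relation `E`:
`w 0, w 1, …, w h` with consecutive edges and `w 0 = w h`. -/
def IsClosedWalk (E : V → V → Prop) (h : ℕ) (w : ℕ → V) : Prop :=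
  (∀ i < h, E (w i) (w (i + 1))) ∧ w 0 = w h

/-- A simple cycle of length `h`: a closed walk whose first `h` vertices are pairwise distinct. -/
def IsSimpleCycle (E : V → V → Prop) (h : ℕ) (w : ℕ → V) : Prop :=
  IsClosedWalk E h w ∧ ∀ a < h, ∀ b < h, w a = w b → a = b

/-- Sufficiency of budget and correct blocks for reachability in the
block-pruned DFS: if the current stack has length d with top vertex u, block values
are correct w.r.t. the stack set S, and p is a path from u to s of length
L ≤ k − d whose vertices other than u avoid S, then every vertex x = w j (j ≥ 1) on p
satisfies block x ≤ p[x] = L − j, hence the pruning condition d + j + block x ≤ k holds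
along p, so the DFS reaches s along p. -/
theorem stmt7 (E : V → V → Prop) (s : V) (S : Set V) (k d : ℕ) (block : V → ℕ)
    (hcorrect : ∀ (x : V) (L : ℕ) (w : ℕ → V), w 0 = x → w L = s →
      (∀ i < L, E (w i) (w (i + 1))) → (∀ i ≤ L, w i ∉ S) → block x ≤ L)
    (u : V) (hu : u ∈ S) (L : ℕ) (w : ℕ → V)
    (h0 : w 0 = u) (hL : w L = s) (hE : ∀ i < L, E (w i) (w (i + 1)))
    (hS : ∀ i, 1 ≤ i → i ≤ L → w i ∉ S)
    (hbudget : L ≤ k - d) (hdk : d ≤ k) :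
    ∀ j, 1 ≤ j → j ≤ L → block (w j) ≤ L - j ∧ d + j + block (w j) ≤ k := by
  intro j hj1 hjL
  have hb : block (w j) ≤ L - j := by
    apply hcorrect (w j) (L - j) (fun i => w (j + i))
    · simp
    · rw [show j + (L - j) = L by omega]; exact hL
    · intro i hi; exact hE (j + i) (by omega)
    · intro i hi; exact hS (j + i) (by omega) (by omega)
  exact ⟨hb, by omega⟩
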